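/- Let S be a numerical semigroup with S ≠ ℕ. Then S̃ is a numerical semigroup if and only if S has at most one atom strictly less than F(S). -/
import Mathlib


open Set

def IsNumericalSet (S : Set ℕ) : Prop := 0 ∈ S ∧ Sᶜ.Finite

def IsNumericalSemigroup (S : Set ℕ) : Prop :=
  IsNumericalSet S ∧ ∀ a ∈ S, ∀ b ∈ S, a + b ∈ S

/-- The associated set `A(S) = {s ∈ S : s + S ⊆ S}`. -/
def A (S : Set ℕ) : Set ℕ := {s ∈ S | ∀ t ∈ S, s + t ∈ S}

/-- The Frobenius number: the largest gap of `S`. -/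
noncomputable def F (S : Set ℕ) : ℕ := sSup Sᶜ

/-- The base: the largest element of `S` below `F S`. -/
noncomputable def B (S : Set ℕ) : ℕ := sSup {s | s ∈ S ∧ s < F S}

/-- The multiplicity: the smallest positive element of `S`. -/
noncomputable def m (S : Set ℕ) : ℕ := sInf {s | s ∈ S ∧ 0 < s}

/-- The complement numerical set (for `S ≠ ℕ`). -/
noncomputable def Stilde (S : Set ℕ) : Set ℕ :=
  {x | ∃ s ∈ S, s ≤ B S ∧ x = B S - s} ∪ {n | B S ≤ n}

-- The complement operation, with the convention that the complement of ℕ is ℕ.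
open Classical in
noncomputable def complOp (S : Set ℕ) : Set ℕ :=
  if S = Set.univ then Set.univ else Stilde S

/-- The genus: the number of gaps. -/
noncomputable def genus (S : Set ℕ) : ℕ := Sᶜ.ncard

/-- The number of boxes with hook length 1. -/
noncomputable def c1 (S : Set ℕ) : ℕ := {n | n ∈ S ∧ n + 1 ∉ S}.ncard

/-- An atom: a positive element not a sum of two positive elements. -/
def IsAtomOf (S : Set ℕ) (a : ℕ) : Prop :=
  a ∈ S ∧ 0 < a ∧ ¬ ∃ x ∈ S, ∃ y ∈ S, 0 < x ∧ 0 < y ∧ a = x + y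

/-- A small atom: an atom smaller than the Frobenius number. -/
def IsSmallAtom (S : Set ℕ) (a : ℕ) : Prop := IsAtomOf S a ∧ a < F S

/-- The embedding dimension: the number of atoms. -/
noncomputable def numAtoms (S : Set ℕ) : ℕ := {a | IsAtomOf S a}.ncard

/-- Maximal embedding dimension. -/
def MaxED (S : Set ℕ) : Prop := numAtoms S = m S


section Aux

variable {S : Set ℕ}

lemma F_notMem (hS : IsNumericalSemigroup S) (hne : S ≠ Set.univ) : F S ∉ S := by
  have hc : Sᶜ.Nonempty := by
    rw [Set.nonempty_compl]; exact hne
  have := Nat.sSup_mem hc hS.1.2.bddAbove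
  exact this

lemma F_pos (hS : IsNumericalSemigroup S) (hne : S ≠ Set.univ) : 0 < F S := by
  rcases Nat.eq_zero_or_pos (F S) with h | h
  · exfalso; exact F_notMem hS hne (h ▸ hS.1.1)
  · exact h

lemma B_bdd (hS : IsNumericalSemigroup S) : BddAbove {s | s ∈ S ∧ s < F S} :=
  ⟨F S, fun x hx => le_of_lt hx.2⟩

lemma B_mem (hS : IsNumericalSemigroup S) (hne : S ≠ Set.univ) : B S ∈ S ∧ B S < F S :=
  Nat.sSup_mem ⟨0, show 0 ∈ S ∧ 0 < F S from ⟨hS.1.1, F_pos hS hne⟩⟩ (B_bdd hS)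

lemma le_B (hS : IsNumericalSemigroup S) {s : ℕ} (hs : s ∈ S) (hlt : s < F S) : s ≤ B S :=
  le_csSup (B_bdd hS) ⟨hs, hlt⟩

lemma m_mem (hS : IsNumericalSemigroup S) : m S ∈ S ∧ 0 < m S := by
  have h1 : F S + 1 ∈ S := by
    by_contra h
    have : F S + 1 ≤ F S := le_csSup hS.1.2.bddAbove h
    omega
  have h2 : sInf {s | s ∈ S ∧ 0 < s} ∈ {s | s ∈ S ∧ 0 < s} :=
    Nat.sInf_mem ⟨F S + 1, h1, by omega⟩
  exact h2

lemma m_le (hS : IsNumericalSemigroup S) {s : ℕ} (hs : s ∈ S) (h : 0 < s) : m S ≤ s := Nat.sInf_le ⟨hs, h⟩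

lemma mul_m_mem (hS : IsNumericalSemigroup S) (k : ℕ) : k * m S ∈ S := by
  induction k with
  | zero => simpa using hS.1.1
  | succ n ih =>
    have := hS.2 _ ih _ (m_mem hS).1
    simpa [Nat.succ_mul] using this

lemma mul_m_mem' (hS : IsNumericalSemigroup S) (k : ℕ) : m S * k ∈ S := by
  rw [mul_comm]; exact mul_m_mem hS k

/-- Condition C extracted from `Stilde S` being a semigroup. -/
lemma condC (hS : IsNumericalSemigroup S) (hT : IsNumericalSemigroup (Stilde S)) {u v : ℕ}
    (hu : u ∈ S) (hv : v ∈ S) (hu1 : 0 < u) (huB : u ≤ B S)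
    (hv1 : 0 < v) (hvB : v ≤ B S) (hsum : B S < u + v) :
    u + v - B S ∈ S := by
  have ha : B S - u ∈ Stilde S := Or.inl ⟨u, hu, huB, rfl⟩
  have hb : B S - v ∈ Stilde S := Or.inl ⟨v, hv, hvB, rfl⟩
  have hab := hT.2 _ ha _ hb
  rcases hab with ⟨t, ht, htB, heq⟩ | h
  · have : t = u + v - B S := by omega
    rwa [← this]
  · exfalso
    simp only [Set.mem_setOf_eq] at h
    omega

/-- If `Stilde S` is a semigroup, each positive `s ≤ B S` is congruent to `B S` mod `m S`. -/
lemma key_forward (hS : IsNumericalSemigroup S) (hT : IsNumericalSemigroup (Stilde S)) {s : ℕ}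
    (hs : s ∈ S) (hs1 : 0 < s) (hsB : s ≤ B S) :
    ∃ k, s + k * m S = B S + m S := by
  have hMpos : 0 < m S := (m_mem hS).2
  have hMs : m S ≤ s := m_le hS hs hs1
  obtain ⟨q, r, hr, hqr⟩ : ∃ q r, r < m S ∧ B S - s = q * m S + r :=
    ⟨(B S - s) / m S, (B S - s) % m S, Nat.mod_lt _ hMpos, by rw [mul_comm]; exact (Nat.div_add_mod _ _).symm⟩
  have hkM : (q + 1) * m S = q * m S + m S := by ring
  have hk2 : B S < s + (q + 1) * m S := by omega
  have hkM_pos : 0 < (q + 1) * m S := by omega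
  have hkM_le : (q + 1) * m S ≤ B S := by omega
  have hw := condC hS hT hs (mul_m_mem hS (q + 1)) hs1 hsB hkM_pos hkM_le hk2
  have hwpos : 0 < s + (q + 1) * m S - B S := by omega
  have hwle : s + (q + 1) * m S - B S ≤ m S := by omega
  have hwge : m S ≤ s + (q + 1) * m S - B S := m_le hS hw hwpos
  exact ⟨q + 1, by omega⟩

/-- From at most one small atom: every positive element below `F` is a multiple of `m S`. -/
lemma key_backward (hS : IsNumericalSemigroup S) (h1 : {a | IsSmallAtom S a}.ncard ≤ 1) :
    ∀ s, s ∈ S → 0 < s → s < F S → m S ∣ s := by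
  intro s
  induction s using Nat.strong_induction_on with
  | _ s ih =>
    intro hs hs1 hsF
    by_cases hatom : ∃ x ∈ S, ∃ y ∈ S, 0 < x ∧ 0 < y ∧ s = x + y
    · obtain ⟨x, hx, y, hy, hx1, hy1, hxy⟩ := hatom
      have hxs : x < s := by omega
      have hys : y < s := by omega
      have d1 := ih x hxs hx hx1 (by omega)
      have d2 := ih y hys hy hy1 (by omega)
      rw [hxy]; exact Nat.dvd_add d1 d2
    · -- s is a small atom
      have hsa : IsSmallAtom S s := ⟨⟨hs, hs1, hatom⟩, hsF⟩
      have hMatom : IsSmallAtom S (m S) := by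
        refine ⟨⟨(m_mem hS).1, (m_mem hS).2, ?_⟩, ?_⟩
        · rintro ⟨x, hx, y, hy, hx1, hy1, hxy⟩
          have := m_le hS hx hx1
          have := m_le hS hy hy1
          omega
        · have := m_le hS hs hs1
          omega
      by_cases hsm : s = m S
      · exact hsm ▸ dvd_refl _
      · exfalso
        have hfin : {a | IsSmallAtom S a}.Finite := by
          apply (Set.finite_Iio (F S)).subset
          intro a ha
          exact ha.2
        have : 1 < {a | IsSmallAtom S a}.ncard :=
          (Set.one_lt_ncard hfin).2 ⟨s, hsa, m S, hMatom, hsm⟩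
        omega

end Aux

theorem complement_semigroup_iff_at_most_one_small_atom (S : Set ℕ)
    (hS : IsNumericalSemigroup S) (hne : S ≠ Set.univ) :
    IsNumericalSemigroup (Stilde S) ↔ {a | IsSmallAtom S a}.ncard ≤ 1 := by
  constructor
  · intro hT
    rcases Nat.eq_zero_or_pos (B S) with hB0 | hB0
    · -- no small atoms at all
      have : {a | IsSmallAtom S a} = ∅ := by
        ext a
        simp only [Set.mem_setOf_eq, Set.mem_empty_iff_false, iff_false]
        rintro ⟨⟨ha, ha1, -⟩, haF⟩
        have := le_B hS ha haF
        omega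
      rw [this]; simp
    · have hmB : m S ≤ B S := m_le hS (B_mem hS hne).1 hB0
      -- m ∣ B
      obtain ⟨k, hk⟩ := key_forward hS hT (m_mem hS).1 (m_mem hS).2 hmB
      have hdB : m S ∣ B S := ⟨k, by rw [mul_comm]; omega⟩
      -- every positive element ≤ B is a multiple of m
      have hdvd : ∀ s ∈ S, 0 < s → s ≤ B S → m S ∣ s := by
        intro s hs hs1 hsB
        obtain ⟨k', hk'⟩ := key_forward hS hT hs hs1 hsB
        obtain ⟨t, ht⟩ := hdB
        have hst : s = (m S * t + m S) - k' * m S := by omega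
        rw [hst]
        exact Nat.dvd_sub (Nat.dvd_add ⟨t, rfl⟩ (dvd_refl _)) ⟨k', mul_comm _ _⟩
      -- small atoms ⊆ {m S}
      have hsub : {a | IsSmallAtom S a} ⊆ {m S} := by
        intro a ⟨⟨ha, ha1, hnd⟩, haF⟩
        have haB : a ≤ B S := le_B hS ha haF
        obtain ⟨j, hj⟩ := hdvd a ha ha1 haB
        have hj0 : j ≠ 0 := by rintro rfl; rw [mul_zero] at hj; omega
        rcases Nat.lt_or_ge j 2 with h2 | h2
        · have : j = 1 := by omega
          simp [hj, this]
        · exfalso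
          apply hnd
          obtain ⟨j', rfl⟩ : ∃ j', j = j' + 1 := ⟨j - 1, by omega⟩
          refine ⟨m S, (m_mem hS).1, m S * j', mul_m_mem' hS j',
            (m_mem hS).2, Nat.mul_pos (m_mem hS).2 (by omega), ?_⟩
          rw [hj]; ring
      calc {a | IsSmallAtom S a}.ncard ≤ ({m S} : Set ℕ).ncard :=
              Set.ncard_le_ncard hsub (Set.finite_singleton _)
        _ = 1 := Set.ncard_singleton _
  · intro h1
    refine ⟨⟨Or.inl ⟨B S, (B_mem hS hne).1, le_rfl, by simp⟩, ?_⟩, ?_⟩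
    · apply (Set.finite_Iio (B S)).subset
      intro x hx
      simp only [Set.mem_compl_iff, Stilde, Set.mem_union, Set.mem_setOf_eq, not_or] at hx
      obtain ⟨-, h2⟩ := hx
      exact Set.mem_Iio.2 (by omega)
    · rintro a ha b hb
      rcases Nat.lt_or_ge (a + b) (B S) with hab | hab
      · -- both come from the first component
        have hgetu : ∀ x, x ∈ Stilde S → x < B S → ∃ u ∈ S, 0 < u ∧ u ≤ B S ∧ x = B S - u := by
          rintro x (⟨u, hu, huB, hxu⟩ | hx) hxB
          · exact ⟨u, hu, by omega, huB, hxu⟩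
          · simp only [Set.mem_setOf_eq] at hx; omega
        obtain ⟨u, hu, hu1, huB, hau⟩ := hgetu a ha (by omega)
        obtain ⟨v, hv, hv1, hvB, hbv⟩ := hgetu b hb (by omega)
        have hsum : B S < u + v := by omega
        have hBpos : 0 < B S := by omega
        have hBF := (B_mem hS hne).2
        have hdu := key_backward hS h1 u hu hu1 (by omega)
        have hdv := key_backward hS h1 v hv hv1 (by omega)
        have hdB := key_backward hS h1 (B S) (B_mem hS hne).1 hBpos hBF
        have hdw : m S ∣ u + v - B S := Nat.dvd_sub (Nat.dvd_add hdu hdv) hdB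
        obtain ⟨t, ht⟩ := hdw
        have hw : u + v - B S ∈ S := by
          rw [ht, mul_comm]; exact mul_m_mem hS t
        exact Or.inl ⟨u + v - B S, hw, by omega, by omega⟩
      · exact Or.inr hab
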